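/- (Vanishing successive differences, Theorem 4(ii)) Under the hypotheses of the alternating minimization scheme — S the set of m×n matrices with unit-norm columns, D ∈ ℝ^{d×n} of full row rank, β > 0, f differentiable with L-Lipschitz gradient and bounded below on S, 0 < α < 1/L, and sequences (M_k) ⊆ S, (P_k) with M_{k+1} minimizing N ↦ ⟨∇f(M_k), N − M_k⟩ + (1/(2α))‖N − M_k‖_F² + (1/(2β))‖N − P_k D‖_F² over N ∈ S and P_{k+1} = M_{k+1} Dᵀ (D Dᵀ)⁻¹ — the series Σ_{k≥0} ‖M_{k+1} − M_k‖_F² converges (it is bounded by (F(M_0, P_0) − inf_{(M,P)} F)/(1/(2α) − L/2) where F(M,P) = f(M) + (1/(2β))‖M − PD‖_F²); consequently M_{k+1} − M_k → 0 and P_{k+1} − P_k → 0. -/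

import Mathlib

open Matrix Filter

attribute [local instance] Matrix.normedAddCommGroup Matrix.normedSpace

/-- The Euclidean norm of the `i`-th column of a matrix. -/
noncomputable def colNorm {m n : ℕ} (M : Matrix (Fin m) (Fin n) ℝ) (i : Fin n) : ℝ :=
  Real.sqrt (∑ k, M k i ^ 2)

/-- The Frobenius inner product `⟨A, B⟩ = Σ_{i,j} a_{ij} b_{ij}` of m×n matrices. -/
noncomputable def finner {m n : ℕ} (A B : Matrix (Fin m) (Fin n) ℝ) : ℝ :=
  ∑ i, ∑ j, A i j * B i j

/-- The squared Frobenius norm `‖V‖_F²`. -/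
noncomputable def frobSq {m n : ℕ} (V : Matrix (Fin m) (Fin n) ℝ) : ℝ :=
  ∑ i, ∑ j, V i j ^ 2

/-- The Frobenius norm `‖V‖_F`. -/
noncomputable def frobNorm {m n : ℕ} (V : Matrix (Fin m) (Fin n) ℝ) : ℝ :=
  Real.sqrt (frobSq V)

lemma frobSq_nonneg {m n : ℕ} (V : Matrix (Fin m) (Fin n) ℝ) : 0 ≤ frobSq V :=
  Finset.sum_nonneg fun _ _ => Finset.sum_nonneg fun _ _ => sq_nonneg _

lemma frobNorm_nonneg {m n : ℕ} (V : Matrix (Fin m) (Fin n) ℝ) : 0 ≤ frobNorm V :=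
  Real.sqrt_nonneg _

lemma frobNorm_sq {m n : ℕ} (V : Matrix (Fin m) (Fin n) ℝ) : frobNorm V ^ 2 = frobSq V :=
  Real.sq_sqrt (frobSq_nonneg V)

lemma finner_le_frobNorm {m n : ℕ} (A B : Matrix (Fin m) (Fin n) ℝ) :
    finner A B ≤ frobNorm A * frobNorm B := by
  have h := Real.sum_mul_le_sqrt_mul_sqrt (Finset.univ : Finset (Fin m × Fin n))
    (fun p => A p.1 p.2) (fun p => B p.1 p.2)
  simpa [finner, frobNorm, frobSq, Fintype.sum_prod_type] using h

lemma finner_sub_left {m n : ℕ} (A B C : Matrix (Fin m) (Fin n) ℝ) :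
    finner (A - B) C = finner A C - finner B C := by
  simp [finner, sub_mul, Finset.sum_sub_distrib]

lemma frobSq_smul {m n : ℕ} (t : ℝ) (V : Matrix (Fin m) (Fin n) ℝ) :
    frobSq (t • V) = t ^ 2 * frobSq V := by
  simp [frobSq, Finset.mul_sum, mul_pow]

lemma frobNorm_smul {m n : ℕ} (t : ℝ) (V : Matrix (Fin m) (Fin n) ℝ) :
    frobNorm (t • V) = |t| * frobNorm V := by
  rw [frobNorm, frobSq_smul, Real.sqrt_mul (sq_nonneg t), Real.sqrt_sq_eq_abs, frobNorm]

/-- Descent lemma. -/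
lemma descent_lemma {m n : ℕ} (L : ℝ) (hL : 0 ≤ L)
    (f : Matrix (Fin m) (Fin n) ℝ → ℝ)
    (f' : Matrix (Fin m) (Fin n) ℝ → Matrix (Fin m) (Fin n) ℝ)
    (hdiff : ∀ X : Matrix (Fin m) (Fin n) ℝ, DifferentiableAt ℝ f X ∧
      ∀ H : Matrix (Fin m) (Fin n) ℝ, fderiv ℝ f X H = finner (f' X) H)
    (hlip : ∀ X Y : Matrix (Fin m) (Fin n) ℝ, frobNorm (f' X - f' Y) ≤ L * frobNorm (X - Y))
    (X Y : Matrix (Fin m) (Fin n) ℝ) :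
    f Y ≤ f X + finner (f' X) (Y - X) + L / 2 * frobSq (Y - X) := by
  set Δ := Y - X with hΔ
  have hline : ∀ t : ℝ, HasDerivAt (fun s : ℝ => X + s • Δ) Δ t := by
    intro t
    have h := ((hasDerivAt_id' t).smul_const Δ).const_add X
    rwa [one_smul] at h
  have hφ : ∀ t : ℝ, HasDerivAt (fun s : ℝ => f (X + s • Δ)) (finner (f' (X + t • Δ)) Δ) t := by
    intro t
    have h1 := ((hdiff (X + t • Δ)).1.hasFDerivAt).comp_hasDerivAt t (hline t)
    rw [← (hdiff (X + t • Δ)).2 Δ]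
    exact h1
  set g : ℝ → ℝ := fun t => f (X + t • Δ) - t * finner (f' X) Δ - t ^ 2 * (L / 2 * frobSq Δ)
    with hg
  have hg' : ∀ t : ℝ, HasDerivAt g
      (finner (f' (X + t • Δ)) Δ - finner (f' X) Δ - 2 * t * (L / 2 * frobSq Δ)) t := by
    intro t
    have h2 : HasDerivAt (fun s : ℝ => s * finner (f' X) Δ) (finner (f' X) Δ) t := by
      simpa using (hasDerivAt_id t).mul_const (finner (f' X) Δ)
    have h3 : HasDerivAt (fun s : ℝ => s ^ 2 * (L / 2 * frobSq Δ)) (2 * t * (L / 2 * frobSq Δ)) t := by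
      have := (hasDerivAt_pow 2 t).mul_const (L / 2 * frobSq Δ)
      simpa [mul_comm] using this
    exact ((hφ t).sub h2).sub h3
  have hder_nonpos : ∀ t ∈ Set.Ioo (0:ℝ) 1,
      finner (f' (X + t • Δ)) Δ - finner (f' X) Δ - 2 * t * (L / 2 * frobSq Δ) ≤ 0 := by
    intro t ht
    have ht0 : 0 ≤ t := le_of_lt ht.1
    have h4 : finner (f' (X + t • Δ)) Δ - finner (f' X) Δ
        = finner (f' (X + t • Δ) - f' X) Δ := (finner_sub_left _ _ _).symm
    have h5 : finner (f' (X + t • Δ) - f' X) Δ ≤ frobNorm (f' (X + t • Δ) - f' X) * frobNorm Δ :=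
      finner_le_frobNorm _ _
    have h6 : frobNorm (f' (X + t • Δ) - f' X) ≤ L * (t * frobNorm Δ) := by
      have := hlip (X + t • Δ) X
      simpa [frobNorm_smul, abs_of_nonneg ht0] using this
    have h7 : frobNorm (f' (X + t • Δ) - f' X) * frobNorm Δ ≤ L * (t * frobNorm Δ) * frobNorm Δ :=
      mul_le_mul_of_nonneg_right h6 (frobNorm_nonneg _)
    have h8 : L * (t * frobNorm Δ) * frobNorm Δ = 2 * t * (L / 2 * frobSq Δ) := by
      rw [← frobNorm_sq]; ring
    rw [h4]
    nlinarith [h5, h7]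
  have hanti : AntitoneOn g (Set.Icc (0:ℝ) 1) := by
    apply antitoneOn_of_deriv_nonpos (convex_Icc 0 1)
    · exact fun t _ => ((hg' t).continuousAt).continuousWithinAt
    · intro t ht
      exact ((hg' t).differentiableAt).differentiableWithinAt
    · intro t ht
      rw [interior_Icc] at ht
      rw [(hg' t).deriv]
      exact hder_nonpos t ht
  have hg01 : g 1 ≤ g 0 :=
    hanti (Set.mem_Icc.2 ⟨le_refl 0, zero_le_one⟩) (Set.mem_Icc.2 ⟨zero_le_one, le_refl 1⟩)
      zero_le_one
  simp only [hg, one_smul, zero_smul, add_zero, one_pow, one_mul, zero_mul, sub_zero,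
    ne_eq, OfNat.ofNat_ne_zero, not_false_eq_true, zero_pow] at hg01
  have : X + Δ = Y := by rw [hΔ]; abel
  rw [this] at hg01
  linarith

lemma frobSq_add {m n : ℕ} (A B : Matrix (Fin m) (Fin n) ℝ) :
    frobSq (A + B) = frobSq A + 2 * finner A B + frobSq B := by
  simp only [frobSq, finner, Matrix.add_apply, add_sq, Finset.sum_add_distrib, Finset.mul_sum]
  ring

lemma finner_mul_right {m n d : ℕ} (A : Matrix (Fin m) (Fin n) ℝ)
    (Q : Matrix (Fin m) (Fin d) ℝ) (D : Matrix (Fin d) (Fin n) ℝ) :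
    finner A (Q * D) = finner (A * Dᵀ) Q := by
  simp only [finner, Matrix.mul_apply, Matrix.transpose_apply, Finset.mul_sum, Finset.sum_mul]
  congr 1; ext i
  rw [Finset.sum_comm]
  congr 1; ext j
  congr 1; ext k
  ring

lemma least_squares {m n d : ℕ} (D : Matrix (Fin d) (Fin n) ℝ) (hD : IsUnit (D * Dᵀ))
    (M : Matrix (Fin m) (Fin n) ℝ) (P : Matrix (Fin m) (Fin d) ℝ) :
    frobSq (M - M * Dᵀ * (D * Dᵀ)⁻¹ * D) ≤ frobSq (M - P * D) := by
  set Pstar := M * Dᵀ * (D * Dᵀ)⁻¹ with hPstar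
  set E := M - Pstar * D with hE
  have hdet : IsUnit (D * Dᵀ).det := (Matrix.isUnit_iff_isUnit_det _).1 hD
  have hEDt : E * Dᵀ = 0 := by
    rw [hE, Matrix.sub_mul, hPstar]
    rw [Matrix.mul_assoc (M * Dᵀ * (D * Dᵀ)⁻¹) D Dᵀ, Matrix.mul_assoc (M * Dᵀ) (D * Dᵀ)⁻¹ (D * Dᵀ),
      Matrix.nonsing_inv_mul _ hdet, Matrix.mul_one, sub_self]
  have hdecomp : M - P * D = E + (Pstar - P) * D := by
    rw [hE, Matrix.sub_mul]; abel
  rw [hdecomp, frobSq_add, finner_mul_right, hEDt]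
  have : finner (0 : Matrix (Fin m) (Fin d) ℝ) (Pstar - P) = 0 := by simp [finner]
  rw [this]
  have := frobSq_nonneg ((Pstar - P) * D)
  linarith

/-- vanishing successive differences, Theorem 4(ii): under the hypotheses
of the alternating minimization scheme, with `f` bounded below on `S`, the series
`Σ_k ‖M_{k+1} − M_k‖_F²` converges — it is bounded by `(F(M₀,P₀) − inf F)/(1/(2α) − L/2)`,
where `F(M,P) = f(M) + (1/(2β))‖M − PD‖_F²` — and consequently `M_{k+1} − M_k → 0` and
`P_{k+1} − P_k → 0`. -/
theorem stmt_15 {m n d : ℕ} (L α β : ℝ) (hL : 0 < L) (hα : 0 < α) (hαL : α < 1 / L)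
    (hβ : 0 < β)
    (D : Matrix (Fin d) (Fin n) ℝ) (hD : IsUnit (D * Dᵀ))
    (f : Matrix (Fin m) (Fin n) ℝ → ℝ)
    (f' : Matrix (Fin m) (Fin n) ℝ → Matrix (Fin m) (Fin n) ℝ)
    (hdiff : ∀ X : Matrix (Fin m) (Fin n) ℝ, DifferentiableAt ℝ f X ∧
      ∀ H : Matrix (Fin m) (Fin n) ℝ, fderiv ℝ f X H = finner (f' X) H)
    (hlip : ∀ X Y : Matrix (Fin m) (Fin n) ℝ, frobNorm (f' X - f' Y) ≤ L * frobNorm (X - Y))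
    (hbdd : ∃ c : ℝ, ∀ M : Matrix (Fin m) (Fin n) ℝ, (∀ i : Fin n, colNorm M i = 1) → c ≤ f M)
    (Mseq : ℕ → Matrix (Fin m) (Fin n) ℝ) (Pseq : ℕ → Matrix (Fin m) (Fin d) ℝ)
    (hMS : ∀ k, ∀ i : Fin n, colNorm (Mseq k) i = 1)
    (hMmin : ∀ k, ∀ N : Matrix (Fin m) (Fin n) ℝ, (∀ i : Fin n, colNorm N i = 1) →
      finner (f' (Mseq k)) (Mseq (k + 1) - Mseq k)
          + 1 / (2 * α) * frobSq (Mseq (k + 1) - Mseq k)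
          + 1 / (2 * β) * frobSq (Mseq (k + 1) - Pseq k * D) ≤
        finner (f' (Mseq k)) (N - Mseq k) + 1 / (2 * α) * frobSq (N - Mseq k)
          + 1 / (2 * β) * frobSq (N - Pseq k * D))
    (hPup : ∀ k, Pseq (k + 1) = Mseq (k + 1) * Dᵀ * (D * Dᵀ)⁻¹) :
    Summable (fun k => frobSq (Mseq (k + 1) - Mseq k)) ∧
    (∀ c : ℝ,
      (∀ (M : Matrix (Fin m) (Fin n) ℝ) (P : Matrix (Fin m) (Fin d) ℝ),
        c ≤ f M + 1 / (2 * β) * frobSq (M - P * D)) →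
      (∑' k, frobSq (Mseq (k + 1) - Mseq k)) ≤
        (f (Mseq 0) + 1 / (2 * β) * frobSq (Mseq 0 - Pseq 0 * D) - c)
          / (1 / (2 * α) - L / 2)) ∧
    Tendsto (fun k => Mseq (k + 1) - Mseq k) atTop (nhds 0) ∧
    Tendsto (fun k => Pseq (k + 1) - Pseq k) atTop (nhds 0) := by
  have hβ2 : (0:ℝ) ≤ 1 / (2 * β) := by positivity
  have hαL' : α * L < 1 := (lt_div_iff₀ hL).1 hαL
  set γ : ℝ := 1 / (2 * α) - L / 2 with hγdef
  have hγ : 0 < γ := by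
    rw [hγdef, sub_pos, div_lt_div_iff₀ two_pos (by positivity)]
    nlinarith
  set F : ℕ → ℝ := fun k => f (Mseq k) + 1 / (2 * β) * frobSq (Mseq k - Pseq k * D) with hF
  set a : ℕ → ℝ := fun k => frobSq (Mseq (k + 1) - Mseq k) with ha
  have key : ∀ k, F (k + 1) + γ * a k ≤ F k := by
    intro k
    have h1 := hMmin k (Mseq k) (hMS k)
    have hz : Mseq k - Mseq k = 0 := sub_self _
    rw [hz] at h1
    simp only [finner, frobSq, Matrix.zero_apply, mul_zero, Finset.sum_const_zero, zero_pow,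
      OfNat.ofNat_ne_zero, ne_eq, not_false_eq_true, add_zero, zero_add, mul_zero] at h1
    have h2 := descent_lemma L hL.le f f' hdiff hlip (Mseq k) (Mseq (k + 1))
    have h3 : frobSq (Mseq (k + 1) - Pseq (k + 1) * D) ≤ frobSq (Mseq (k + 1) - Pseq k * D) := by
      rw [hPup k]
      exact least_squares D hD (Mseq (k + 1)) (Pseq k)
    have h3' := mul_le_mul_of_nonneg_left h3 hβ2
    simp only [hF, hγdef, ha]
    simp only [finner, frobSq] at h1 h2 h3' ⊢
    nlinarith [h1, h2, h3']
  have hFsub : ∀ K : ℕ, F K + ∑ i ∈ Finset.range K, γ * a i ≤ F 0 := by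
    intro K
    induction K with
    | zero => simp
    | succ K ih =>
      rw [Finset.sum_range_succ]
      have := key K
      linarith
  have ha_nonneg : ∀ k, 0 ≤ a k := fun k => frobSq_nonneg _
  obtain ⟨c₀, hc₀⟩ := hbdd
  have hFlb : ∀ K, c₀ ≤ F K := by
    intro K
    have h1 := hc₀ (Mseq K) (hMS K)
    have h2 := frobSq_nonneg (Mseq K - Pseq K * D)
    simp only [hF]
    nlinarith
  have hsumbound : ∀ (c : ℝ), (∀ K, c ≤ F K) →
      ∀ K : ℕ, ∑ i ∈ Finset.range K, a i ≤ (F 0 - c) / γ := by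
    intro c hc K
    rw [le_div_iff₀ hγ]
    have h1 := hFsub K
    have h2 := hc K
    have hmul : ∑ i ∈ Finset.range K, γ * a i = (∑ i ∈ Finset.range K, a i) * γ := by
      rw [← Finset.mul_sum, mul_comm]
    linarith
  have hsummable : Summable a :=
    summable_of_sum_range_le ha_nonneg (hsumbound c₀ hFlb)
  refine ⟨hsummable, ?_, ?_, ?_⟩
  · intro c hc
    have hcF : ∀ K, c ≤ F K := fun K => hc (Mseq K) (Pseq K)
    exact Real.tsum_le_of_sum_range_le ha_nonneg (hsumbound c hcF)
  · -- M differences tend to 0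
    have haz : Tendsto a atTop (nhds 0) := hsummable.tendsto_atTop_zero
    have hsq : Tendsto (fun k => Real.sqrt (a k)) atTop (nhds 0) := by
      have := (Real.continuous_sqrt.tendsto 0).comp haz
      rw [Real.sqrt_zero] at this
      exact this
    apply squeeze_zero_norm _ hsq
    intro k
    have hb : ∀ (i : Fin m) (j : Fin n), |(Mseq (k+1) - Mseq k) i j| ≤ Real.sqrt (a k) := by
      intro i j
      rw [← Real.sqrt_sq_eq_abs]
      apply Real.sqrt_le_sqrt
      simp only [ha, frobSq]
      calc (Mseq (k+1) - Mseq k) i j ^ 2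
          ≤ ∑ j', (Mseq (k+1) - Mseq k) i j' ^ 2 :=
            Finset.single_le_sum (f := fun j' => (Mseq (k+1) - Mseq k) i j' ^ 2)
              (fun _ _ => sq_nonneg _) (Finset.mem_univ j)
        _ ≤ ∑ i', ∑ j', (Mseq (k+1) - Mseq k) i' j' ^ 2 :=
            Finset.single_le_sum (f := fun i' => ∑ j', (Mseq (k+1) - Mseq k) i' j' ^ 2)
              (fun _ _ => Finset.sum_nonneg fun _ _ => sq_nonneg _) (Finset.mem_univ i)
    rw [Matrix.norm_le_iff (Real.sqrt_nonneg _)]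
    intro i
    intro j
    exact (Real.norm_eq_abs _).le.trans_eq' rfl |>.trans (hb i j)
  · -- P differences tend to 0
    have haz : Tendsto a atTop (nhds 0) := hsummable.tendsto_atTop_zero
    have hsq : Tendsto (fun k => Real.sqrt (a k)) atTop (nhds 0) := by
      have := (Real.continuous_sqrt.tendsto 0).comp haz
      rw [Real.sqrt_zero] at this
      exact this
    have hMtend : Tendsto (fun k => Mseq (k + 1) - Mseq k) atTop
        (nhds (0 : Matrix (Fin m) (Fin n) ℝ)) := by
      apply squeeze_zero_norm _ hsq
      intro k
      have hb : ∀ (i : Fin m) (j : Fin n), |(Mseq (k+1) - Mseq k) i j| ≤ Real.sqrt (a k) := by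
        intro i j
        rw [← Real.sqrt_sq_eq_abs]
        apply Real.sqrt_le_sqrt
        simp only [ha, frobSq]
        calc (Mseq (k+1) - Mseq k) i j ^ 2
            ≤ ∑ j', (Mseq (k+1) - Mseq k) i j' ^ 2 :=
              Finset.single_le_sum (f := fun j' => (Mseq (k+1) - Mseq k) i j' ^ 2)
                (fun _ _ => sq_nonneg _) (Finset.mem_univ j)
          _ ≤ ∑ i', ∑ j', (Mseq (k+1) - Mseq k) i' j' ^ 2 :=
              Finset.single_le_sum (f := fun i' => ∑ j', (Mseq (k+1) - Mseq k) i' j' ^ 2)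
                (fun _ _ => Finset.sum_nonneg fun _ _ => sq_nonneg _) (Finset.mem_univ i)
      rw [Matrix.norm_le_iff (Real.sqrt_nonneg _)]
      intro i
      intro j
      exact (Real.norm_eq_abs _).le.trans_eq' rfl |>.trans (hb i j)
    have hMshift : Tendsto (fun k => Mseq (k + 2) - Mseq (k + 1)) atTop
        (nhds (0 : Matrix (Fin m) (Fin n) ℝ)) := by
      have := hMtend.comp (tendsto_add_atTop_nat 1)
      exact this
    have hcont : Continuous (fun X : Matrix (Fin m) (Fin n) ℝ => X * (Dᵀ * (D * Dᵀ)⁻¹)) :=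
      continuous_id.matrix_mul continuous_const
    have hPt : Tendsto (fun k => (Mseq (k + 2) - Mseq (k + 1)) * (Dᵀ * (D * Dᵀ)⁻¹)) atTop
        (nhds (0 : Matrix (Fin m) (Fin d) ℝ)) := by
      have := (hcont.tendsto 0).comp hMshift
      simp only [Matrix.zero_mul] at this
      exact this
    rw [← tendsto_add_atTop_iff_nat 1]
    have heq : (fun k => Pseq (k + 1 + 1) - Pseq (k + 1)) =
        fun k => (Mseq (k + 2) - Mseq (k + 1)) * (Dᵀ * (D * Dᵀ)⁻¹) := by
      funext k
      rw [hPup (k + 1), hPup k, Matrix.sub_mul, Matrix.mul_assoc, Matrix.mul_assoc]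
    rw [heq]
    exact hPt
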